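/- Let L be the model of the free graded Lie algebra on two generators a, b of odd degree described in the context. The family of elements ⁅b, ad(a)^j(b)⁆ for j ≥ 0 is linearly independent in L; in particular each of these elements is a nonzero element of L^{(2, j+2)}. -/

import Mathlib

/-!
Common setup: the free graded Lie algebra on two odd-degree generators `a`, `b`,
modelled inside its universal enveloping algebra `A := FreeAlgebra ℚ (Fin 2)`.
-/

noncomputable section

namespace Omnibus

/-- The free associative unital `ℚ`-algebra on two generators. -/
abbrev A : Type := FreeAlgebra ℚ (Fin 2)

/-- The first generator, of odd degree. -/
def a : A := FreeAlgebra.ι ℚ 0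

/-- The second generator, of odd degree. -/
def b : A := FreeAlgebra.ι ℚ 1

/-- The word (noncommutative monomial) in the letters `a`, `b` associated to a
list of letters. -/
def word (w : List (Fin 2)) : A := (w.map (FreeAlgebra.ι ℚ)).prod

/-- The `ℚ`-basis of `A` given by the words in `a`, `b`. -/
def basisWords : Module.Basis (FreeMonoid (Fin 2)) ℚ A := FreeAlgebra.basisFreeMonoid ℚ (Fin 2)

/-- The `ℚ`-linear projection of `A` onto the span of the words of odd length,
sending every word of even length to `0`. -/
def pr : A →ₗ[ℚ] A :=
  basisWords.constr ℚ fun w =>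
    if Odd (FreeMonoid.toList w).length then word (FreeMonoid.toList w) else 0

/-- The bracket `⁅x,y⁆ = x*y − y*x + 2·(π y)·(π x)`; on elements homogeneous for the
parity grading by word length this is the super-commutator for both generators odd. -/
def br (x y : A) : A := x * y - y * x + 2 * pr y * pr x

/-- A `ℚ`-subspace of `A` closed under the bracket. -/
def IsBracketClosed (S : Submodule ℚ A) : Prop := ∀ x ∈ S, ∀ y ∈ S, br x y ∈ S

/-- `L`: the smallest `ℚ`-subspace of `A` containing `a`, `b` and closed under the
bracket; a model of the free graded Lie algebra on two odd-degree generators. -/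
def L : Submodule ℚ A := sInf {S : Submodule ℚ A | a ∈ S ∧ b ∈ S ∧ IsBracketClosed S}

/-- The span of the set of words `w` satisfying a property `P`. -/
def wordsSpan (P : List (Fin 2) → Prop) : Submodule ℚ A :=
  Submodule.span ℚ (word '' {w | P w})

/-- `L^{(k)}`: the part of `L` of word length `k` in `b`. -/
def Lk (k : ℕ) : Submodule ℚ A := L ⊓ wordsSpan fun w => w.count 1 = k

/-- `L^{(k,n)}`: the part of `L` of word length `k` in `b` and total word length `n`. -/
def Lkn (k n : ℕ) : Submodule ℚ A :=
  L ⊓ wordsSpan fun w => w.count 1 = k ∧ w.length = n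

/-- The `j`-fold iterated adjoint map `ad(x)^j(y)`. -/
def adIter (x : A) (j : ℕ) (y : A) : A := (br x)^[j] y

def e : A ≃ₐ[ℚ] MonoidAlgebra ℚ (FreeMonoid (Fin 2)) := FreeAlgebra.equivMonoidAlgebraFreeMonoid

lemma e_iota (i : Fin 2) : e (FreeAlgebra.ι ℚ i) = MonoidAlgebra.single (FreeMonoid.of i) 1 := by
  simp [e, FreeAlgebra.equivMonoidAlgebraFreeMonoid]

lemma e_word (w : List (Fin 2)) :
    e (word w) = MonoidAlgebra.single (FreeMonoid.ofList w) 1 := by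
  induction w with
  | nil => simpa [word] using (MonoidAlgebra.one_def (R := ℚ) (M := FreeMonoid (Fin 2)))
  | cons i w ih =>
    have h : word (i :: w) = FreeAlgebra.ι ℚ i * word w := by simp [word]
    rw [h, map_mul, ih, e_iota, MonoidAlgebra.single_mul_single, one_mul]
    rfl

lemma basisWords_apply (m : FreeMonoid (Fin 2)) : basisWords m = word m.toList := by
  apply e.injective
  rw [e_word]
  simp [basisWords, FreeAlgebra.basisFreeMonoid, e]

def coeff (u : List (Fin 2)) : A →ₗ[ℚ] ℚ :=
  (Finsupp.lapply (FreeMonoid.ofList u)).comp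
    ((MonoidAlgebra.coeffLinearEquiv ℚ).toLinearMap.comp e.toLinearEquiv.toLinearMap)

lemma coeff_word (u w : List (Fin 2)) :
    coeff u (word w) = if w = u then 1 else 0 := by
  show (e (word w)).coeff (FreeMonoid.ofList u) = _
  classical
  rw [e_word, MonoidAlgebra.single_apply]
  simp only [Equiv.apply_eq_iff_eq]

lemma word_induction {p : A → Prop} (h0 : p 0) (hw : ∀ w, p (word w))
    (hadd : ∀ x y, p x → p y → p (x + y)) (hsmul : ∀ (c : ℚ) x, p x → p (c • x)) :
    ∀ x : A, p x := by
  intro x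
  have hx : x ∈ Submodule.span ℚ (Set.range basisWords) := by
    rw [basisWords.span_eq]; trivial
  refine Submodule.span_induction ?_ h0 (fun x y _ _ => hadd x y) (fun c x _ => hsmul c x) hx
  rintro _ ⟨m, rfl⟩
  rw [basisWords_apply]; exact hw _

lemma word_cons (i : Fin 2) (w : List (Fin 2)) :
    word (i :: w) = FreeAlgebra.ι ℚ i * word w := by simp [word]

lemma word_append (u v : List (Fin 2)) : word (u ++ v) = word u * word v := by
  simp [word]

lemma word_singleton (i : Fin 2) : word [i] = FreeAlgebra.ι ℚ i := by simp [word]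

/-- pr on a word -/
lemma pr_word (w : List (Fin 2)) :
    pr (word w) = if Odd w.length then word w else 0 := by
  have h := basisWords.constr_basis ℚ
    (fun m => if Odd (FreeMonoid.toList m).length then word (FreeMonoid.toList m) else 0)
    (FreeMonoid.ofList w)
  rw [basisWords_apply] at h
  exact h

/-- coeff of ι i * x at cons -/
lemma coeff_iota_mul (i j : Fin 2) (u : List (Fin 2)) (x : A) :
    coeff (j :: u) (FreeAlgebra.ι ℚ i * x) = if i = j then coeff u x else 0 := by
  induction x using word_induction with
  | h0 => simp
  | hw w =>
    rw [← word_cons, coeff_word, coeff_word]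
    by_cases h : i = j
    · subst h; simp
    · simp [h]
  | hadd x y hx hy =>
    rw [mul_add, map_add, hx, hy, map_add]
    split <;> simp
  | hsmul c x hx =>
    rw [mul_smul_comm, map_smul, hx, map_smul]
    split <;> simp

/-- coeff of x * ι i at append -/
lemma coeff_mul_iota (i j : Fin 2) (u : List (Fin 2)) (x : A) :
    coeff (u ++ [j]) (x * FreeAlgebra.ι ℚ i) = if i = j then coeff u x else 0 := by
  induction x using word_induction with
  | h0 => simp
  | hw w =>
    rw [← word_singleton, ← word_append, coeff_word, coeff_word]
    by_cases h : i = j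
    · subst h; simp
    · have : ¬ (w ++ [i] = u ++ [j]) := by
        intro hc
        have := List.append_inj_right' hc rfl
        simp at this
        exact h this
      simp [h, this]
  | hadd x y hx hy =>
    rw [add_mul, map_add, hx, hy, map_add]
    split <;> simp
  | hsmul c x hx =>
    rw [smul_mul_assoc, map_smul, hx, map_smul]
    split <;> simp

/-- coeff vanishes outside the span's words -/
lemma coeff_eq_zero_of_mem_wordsSpan {P : List (Fin 2) → Prop} {x : A}
    (hx : x ∈ wordsSpan P) {u : List (Fin 2)} (hu : ¬ P u) : coeff u x = 0 := by
  induction hx using Submodule.span_induction with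
  | mem y hy =>
    obtain ⟨w, hw, rfl⟩ := hy
    rw [coeff_word]
    split
    · next h => exact absurd (h ▸ hw) hu
    · rfl
  | zero => simp
  | add x _ y _ hx hy => rw [map_add, hx, hy, add_zero]
  | smul c x _ hx => rw [map_smul, hx, smul_zero]

lemma pr_eq_of_mem_wordsSpan {P : List (Fin 2) → Prop} {n : ℕ}
    (hP : ∀ w, P w → w.length = n) {x : A} (hx : x ∈ wordsSpan P) :
    pr x = if Odd n then x else 0 := by
  induction hx using Submodule.span_induction with
  | mem y hy =>
    obtain ⟨w, hw, rfl⟩ := hy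
    rw [pr_word, hP w hw]
  | zero => simp
  | add x _ y _ hx hy =>
    rw [map_add, hx, hy]
    split <;> simp
  | smul c x _ hx =>
    rw [map_smul, hx]
    split <;> simp

lemma iota_mul_mem_wordsSpan {P Q : List (Fin 2) → Prop} (i : Fin 2)
    (h : ∀ w, P w → Q (i :: w)) {x : A} (hx : x ∈ wordsSpan P) :
    FreeAlgebra.ι ℚ i * x ∈ wordsSpan Q := by
  induction hx using Submodule.span_induction with
  | mem y hy =>
    obtain ⟨w, hw, rfl⟩ := hy
    rw [← word_cons]
    exact Submodule.subset_span ⟨i :: w, h w hw, rfl⟩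
  | zero => simp
  | add x _ y _ hx hy => rw [mul_add]; exact add_mem hx hy
  | smul c x _ hx => rw [mul_smul_comm]; exact Submodule.smul_mem _ _ hx

lemma mul_iota_mem_wordsSpan {P Q : List (Fin 2) → Prop} (i : Fin 2)
    (h : ∀ w, P w → Q (w ++ [i])) {x : A} (hx : x ∈ wordsSpan P) :
    x * FreeAlgebra.ι ℚ i ∈ wordsSpan Q := by
  induction hx using Submodule.span_induction with
  | mem y hy =>
    obtain ⟨w, hw, rfl⟩ := hy
    rw [← word_singleton, ← word_append]
    exact Submodule.subset_span ⟨w ++ [i], h w hw, rfl⟩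
  | zero => simp
  | add x _ y _ hx hy => rw [add_mul]; exact add_mem hx hy
  | smul c x _ hx => rw [smul_mul_assoc]; exact Submodule.smul_mem _ _ hx

lemma a_mem_L : a ∈ L := by
  rw [L, Submodule.mem_sInf]; exact fun S hS => hS.1

lemma b_mem_L : b ∈ L := by
  rw [L, Submodule.mem_sInf]; exact fun S hS => hS.2.1

lemma L_bracketClosed : IsBracketClosed L := by
  intro x hx y hy
  rw [L, Submodule.mem_sInf] at *
  intro S hS
  exact hS.2.2 x (hx S hS) y (hy S hS)

lemma pr_a : pr a = a := by
  have := pr_word [0]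
  rw [word_singleton] at this
  simpa [a] using this

lemma pr_b : pr b = b := by
  have := pr_word [1]
  rw [word_singleton] at this
  simpa [b] using this

/-- the iterate c j := ad(a)^j b -/
lemma adIter_succ (j : ℕ) : adIter a (j+1) b = br a (adIter a j b) :=
  Function.iterate_succ_apply' _ _ _

lemma c_main (j : ℕ) :
    adIter a j b ∈ L ∧
    adIter a j b ∈ wordsSpan (fun w => w.count 1 = 1 ∧ w.length = j + 1) ∧
    coeff (List.replicate j 0 ++ [1]) (adIter a j b) = 1 := by
  induction j with
  | zero =>
    have hb : adIter a 0 b = b := rfl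
    have hb1 : b = word [1] := by rw [word_singleton]; rfl
    refine ⟨hb ▸ b_mem_L, ?_, ?_⟩
    · rw [hb, hb1]
      exact Submodule.subset_span ⟨[1], by simp, rfl⟩
    · rw [hb, hb1, coeff_word]
      simp
  | succ j ih =>
    obtain ⟨hL, hS, hc⟩ := ih
    set c := adIter a j b with hcdef
    have hpr : pr c = if Odd (j+1) then c else 0 :=
      pr_eq_of_mem_wordsSpan (fun w hw => hw.2) hS
    have hbr : adIter a (j+1) b = a * c - c * a + 2 * pr c * pr a := by
      rw [adIter_succ]; rfl
    have hmemS : ∀ x ∈ wordsSpan (fun w => w.count 1 = 1 ∧ w.length = j + 1),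
        a * x ∈ wordsSpan (fun w => w.count 1 = 1 ∧ w.length = (j+1) + 1) := by
      intro x hx
      exact iota_mul_mem_wordsSpan 0 (fun w hw => by
        simp [List.count_cons, hw.1, hw.2]) hx
    have hmemS' : ∀ x ∈ wordsSpan (fun w => w.count 1 = 1 ∧ w.length = j + 1),
        x * a ∈ wordsSpan (fun w => w.count 1 = 1 ∧ w.length = (j+1) + 1) := by
      intro x hx
      exact mul_iota_mem_wordsSpan 0 (fun w hw => by
        simp [List.count_append, hw.1, hw.2]) hx
    have hrep : List.replicate (j+1) (0 : Fin 2) ++ [1]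
        = 0 :: (List.replicate j 0 ++ [1]) := by
      rw [List.replicate_succ]; rfl
    have hcoeff1 : coeff (List.replicate (j+1) 0 ++ [1]) (a * c) = 1 := by
      rw [hrep]
      have := coeff_iota_mul (0 : Fin 2) 0 (List.replicate j 0 ++ [1]) c
      simpa [a, hc] using this
    have hcoeff2 : coeff (List.replicate (j+1) 0 ++ [1]) (c * a) = 0 := by
      have := coeff_mul_iota (0 : Fin 2) 1 (List.replicate (j+1) 0) c
      simpa [a] using this
    refine ⟨?_, ?_, ?_⟩
    · have := L_bracketClosed a a_mem_L c hL
      rw [adIter_succ]; exact this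
    · rw [hbr, hpr, pr_a]
      rcases Nat.even_or_odd (j+1) with he | ho
      · rw [if_neg (by simpa using he)]
        simpa using sub_mem (hmemS c hS) (hmemS' c hS)
      · rw [if_pos ho]
        have h2 : (2 : A) * c * a = c * a + c * a := by rw [two_mul, add_mul]
        rw [h2]
        exact add_mem (sub_mem (hmemS c hS) (hmemS' c hS))
          (add_mem (hmemS' c hS) (hmemS' c hS))
    · rw [hbr, hpr, pr_a]
      rcases Nat.even_or_odd (j+1) with he | ho
      · rw [if_neg (by simpa using he)]
        simp [hcoeff1, hcoeff2]
      · rw [if_pos ho]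
        have h2 : (2 : A) * c * a = c * a + c * a := by rw [two_mul, add_mul]
        rw [h2]
        simp [hcoeff1, hcoeff2]

def tgt (j : ℕ) : List (Fin 2) := List.replicate j 0 ++ [1, 1]

lemma d_mem (j : ℕ) :
    br b (adIter a j b) ∈ wordsSpan (fun w => w.count 1 = 2 ∧ w.length = j + 2) := by
  obtain ⟨hL, hS, hc⟩ := c_main j
  set c := adIter a j b
  have hpr : pr c = if Odd (j+1) then c else 0 :=
    pr_eq_of_mem_wordsSpan (fun w hw => hw.2) hS
  have h1 : b * c ∈ wordsSpan (fun w => w.count 1 = 2 ∧ w.length = j + 2) :=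
    iota_mul_mem_wordsSpan 1 (fun w hw => by
      simp [List.count_cons, hw.1, hw.2]) hS
  have h2 : c * b ∈ wordsSpan (fun w => w.count 1 = 2 ∧ w.length = j + 2) :=
    mul_iota_mem_wordsSpan 1 (fun w hw => by
      simp [List.count_append, hw.1, hw.2]) hS
  show b * c - c * b + 2 * pr c * pr b ∈ _
  rw [hpr, pr_b]
  rcases Nat.even_or_odd (j+1) with he | ho
  · rw [if_neg (by simpa using he)]
    simpa using sub_mem h1 h2
  · rw [if_pos ho]
    have h2' : (2 : A) * c * b = c * b + c * b := by rw [two_mul, add_mul]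
    rw [h2']
    exact add_mem (sub_mem h1 h2) (add_mem h2 h2)

lemma d_coeff (j : ℕ) : coeff (tgt j) (br b (adIter a j b)) ≠ 0 := by
  obtain ⟨hL, hS, hc⟩ := c_main j
  set c := adIter a j b with hcdef
  have hpr : pr c = if Odd (j+1) then c else 0 :=
    pr_eq_of_mem_wordsSpan (fun w hw => hw.2) hS
  have hsplit : tgt j = (List.replicate j 0 ++ [1]) ++ [1] := by
    simp [tgt]
  have hcb : coeff (tgt j) (c * b) = 1 := by
    rw [hsplit]
    have := coeff_mul_iota (1 : Fin 2) 1 (List.replicate j 0 ++ [1]) c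
    simpa [b, hc] using this
  have hbc : coeff (tgt j) (b * c) = if j = 0 then 1 else 0 := by
    cases j with
    | zero =>
      have ht : tgt 0 = 1 :: [1] := by simp [tgt]
      rw [ht]
      have := coeff_iota_mul (1 : Fin 2) 1 [1] c
      have hcc : coeff [1] c = 1 := by simpa using hc
      simpa [b, hcc] using this
    | succ m =>
      have ht : tgt (m+1) = 0 :: (List.replicate m 0 ++ [1, 1]) := by
        simp [tgt, List.replicate_succ]
      rw [ht]
      have := coeff_iota_mul (1 : Fin 2) 0 (List.replicate m 0 ++ [1, 1]) c
      simpa [b] using this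
  show coeff (tgt j) (b * c - c * b + 2 * pr c * pr b) ≠ 0
  rw [hpr, pr_b]
  rcases Nat.even_or_odd (j+1) with he | ho
  · rw [if_neg (by simpa using he)]
    have hj : j ≠ 0 := by rintro rfl; simp at he
    simp [hbc, hcb, hj]
  · rw [if_pos ho]
    have h2' : (2 : A) * c * b = c * b + c * b := by rw [two_mul, add_mul]
    rw [h2']
    rcases Nat.eq_zero_or_pos j with rfl | hj
    · simp [hbc, hcb]
    · have hj : j ≠ 0 := hj.ne'
      simp [hbc, hcb, hj]

lemma d_mem_L (j : ℕ) : br b (adIter a j b) ∈ L :=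
  L_bracketClosed b b_mem_L _ (c_main j).1


end Omnibus

open Omnibus in
/-- The family `⁅b, ad(a)^j(b)⁆`, `j ≥ 0`, is linearly independent in `L`; in particular each
of these elements is a nonzero element of `L^{(2,j+2)}`. -/
theorem bracket_b_adIter_linearIndependent :
    LinearIndependent ℚ (fun j : ℕ => br b (adIter a j b)) ∧
    ∀ j : ℕ, br b (adIter a j b) ∈ Lkn 2 (j + 2) ∧ br b (adIter a j b) ≠ 0 := by
  constructor
  · rw [linearIndependent_iff']
    intro s g hsum i hi
    have happ := congrArg (coeff (tgt i)) hsum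
    rw [map_sum, map_zero] at happ
    have hz : ∀ j ∈ s, j ≠ i → coeff (tgt i) (g j • br b (adIter a j b)) = 0 := by
      intro j _ hji
      rw [map_smul]
      have h0 : coeff (tgt i) (br b (adIter a j b)) = 0 := by
        refine coeff_eq_zero_of_mem_wordsSpan (d_mem j) ?_
        intro hP
        have : (tgt i).length = i + 2 := by simp [tgt]
        omega
      rw [h0, smul_zero]
    rw [Finset.sum_eq_single i hz (fun h => absurd hi h)] at happ
    rw [map_smul, smul_eq_mul] at happ
    exact (mul_eq_zero.mp happ).resolve_right (d_coeff i)
  · intro j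
    refine ⟨⟨d_mem_L j, d_mem j⟩, ?_⟩
    intro h0
    exact d_coeff j (by rw [h0, map_zero])
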